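/- Let P be a poset and C a convergence class consisting of pairs (D, x) with D directed and x ∈ D^δ, containing all pairs ({y}, x) with x ≤ y. Then the space (P, C(P)) is a directed space. -/

import Mathlib

open Set

variable {P : Type*} [PartialOrder P]

/-- The (monotone net given by the) directed set `D` is eventually in `U`. -/
def EvIn (D U : Set P) : Prop := ∃ d ∈ D, ∀ e ∈ D, d ≤ e → e ∈ U

/-- The topology determined by the convergence class `C`:
`U` is open iff every directed set in `C` converging to a point of `U` is eventually in `U`. -/
def COpen (C : Set (Set P × P)) (U : Set P) : Prop :=
  ∀ p ∈ C, p.2 ∈ U → EvIn p.1 U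

/-- The cut `D^δ`: lower bounds of the set of upper bounds of `D`. -/
def cut (D : Set P) : Set P := {x | ∀ y : P, (∀ d ∈ D, d ≤ y) → x ≤ y}

/-- The specialization order of `(P, C(P))`. -/
def cLe (C : Set (Set P × P)) (x y : P) : Prop :=
  ∀ U : Set P, COpen C U → x ∈ U → y ∈ U

/-- Convergence of a directed set in the topology `C(P)`. -/
def cConv (C : Set (Set P × P)) (D : Set P) (x : P) : Prop :=
  ∀ U : Set P, COpen C U → x ∈ U → (D ∩ U).Nonempty

/-- `(P, C(P))` is a directed space: every subset that is directed-open for `C(P)` is open. -/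
theorem stmt_7 (C : Set (Set P × P))
    (hC : ∀ p ∈ C, p.1.Nonempty ∧ DirectedOn (· ≤ ·) p.1)
    (hsingle : ∀ x y : P, x ≤ y → (({y} : Set P), x) ∈ C)
    (hcut : ∀ p ∈ C, p.2 ∈ cut p.1)
    (U : Set P)
    (hU : ∀ (D : Set P) (x : P), D.Nonempty → DirectedOn (cLe C) D → cConv C D x → x ∈ U →
      (D ∩ U).Nonempty) :
    COpen C U := by
  intro p hp hxU
  by_contra hev
  simp only [EvIn, not_exists] at hev
  have hev' : ∀ d ∈ p.1, ∃ e ∈ p.1, d ≤ e ∧ e ∉ U := by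
    intro d hd
    have := hev d
    push_neg at this
    exact this hd
  obtain ⟨hne, hdir⟩ := hC p hp
  -- ≤ implies cLe
  have hle : ∀ x y : P, x ≤ y → cLe C x y := by
    intro x y hxy V hV hxV
    obtain ⟨d, hd, hdall⟩ := hV _ (hsingle x y hxy) hxV
    rcases hd with rfl
    exact hdall d rfl le_rfl
  set D'' := p.1 \ U with hD''
  have hne'' : D''.Nonempty := by
    obtain ⟨d, hd⟩ := hne
    obtain ⟨e, he, _, heU⟩ := hev' d hd
    exact ⟨e, he, heU⟩
  have hdir'' : DirectedOn (cLe C) D'' := by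
    rintro a ⟨ha, haU⟩ b ⟨hb, hbU⟩
    obtain ⟨c, hc, hac, hbc⟩ := hdir a ha b hb
    obtain ⟨e, he, hce, heU⟩ := hev' c hc
    exact ⟨e, ⟨he, heU⟩, hle _ _ (hac.trans hce), hle _ _ (hbc.trans hce)⟩
  have hconv : cConv C D'' p.2 := by
    intro V hV hxV
    obtain ⟨d, hd, hdall⟩ := hV p hp hxV
    obtain ⟨e, he, hde, heU⟩ := hev' d hd
    exact ⟨e, ⟨he, heU⟩, hdall e he hde⟩
  obtain ⟨e, ⟨_, heU⟩, heU'⟩ := hU D'' p.2 hne'' hdir'' hconv hxU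
  exact heU heU'
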